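/- Let M be a right H-Hopf module algebra over a Hopf algebra H. Then (M, P_R) with P_R(m) = m_(0)·S(m_(1)) is a Rota-Baxter algebra of weight −1: P_R(x)P_R(y) = P_R(xP_R(y)) + P_R(P_R(x)y) − P_R(xy) for all x, y ∈ M. -/

import Mathlib

open TensorProduct LinearMap

/-- A right Hopf module over a Hopf algebra `H`: `act` is a right `H`-module structure,
`ρ` is a right `H`-comodule structure, and the compatibility `ρ (m · h) = ρ(m) Δ(h)` holds. -/
def IsRightHopfModule (K : Type*) [Field K] (H : Type*) [Ring H] [HopfAlgebra K H]
    {M : Type*} [AddCommGroup M] [Module K M]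
    (act : M ⊗[K] H →ₗ[K] M) (ρ : M →ₗ[K] M ⊗[K] H) : Prop :=
  -- right module axioms
  (∀ (m : M) (h h' : H), act (act (m ⊗ₜ[K] h) ⊗ₜ[K] h') = act (m ⊗ₜ[K] (h * h'))) ∧
  (∀ m : M, act (m ⊗ₜ[K] (1 : H)) = m) ∧
  -- right comodule axioms: coassociativity and counitality
  (rTensor H ρ ∘ₗ ρ =
    (TensorProduct.assoc K M H H).symm.toLinearMap ∘ₗ lTensor M (Coalgebra.comul (R := K)) ∘ₗ ρ) ∧
  (∀ m : M, (TensorProduct.rid K M) ((lTensor M (Coalgebra.counit (R := K))) (ρ m)) = m) ∧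
  -- Hopf module compatibility: ρ(m·h) = m₍₀₎·h₁ ⊗ m₍₁₎h₂
  (ρ ∘ₗ act =
    TensorProduct.map act (LinearMap.mul' K H) ∘ₗ
      (tensorTensorTensorComm K M H H H).toLinearMap ∘ₗ
        TensorProduct.map ρ (Coalgebra.comul (R := K)))

/-- A right `H`-Hopf module algebra: a right Hopf module `M` with an associative
multiplication `mul` satisfying `(mm')·h = m(m'·h)` and `ρ(mm') = m₍₀₎m'₍₀₎ ⊗ m₍₁₎m'₍₁₎`. -/
def IsRightHopfModuleAlgebra (K : Type*) [Field K] (H : Type*) [Ring H] [HopfAlgebra K H]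
    {M : Type*} [AddCommGroup M] [Module K M]
    (act : M ⊗[K] H →ₗ[K] M) (ρ : M →ₗ[K] M ⊗[K] H) (mul : M ⊗[K] M →ₗ[K] M) : Prop :=
  IsRightHopfModule K H act ρ ∧
  -- associativity
  (∀ a b c : M, mul (mul (a ⊗ₜ[K] b) ⊗ₜ[K] c) = mul (a ⊗ₜ[K] mul (b ⊗ₜ[K] c))) ∧
  -- (mm')·h = m(m'·h)
  (act ∘ₗ rTensor H mul = mul ∘ₗ lTensor M act ∘ₗ (TensorProduct.assoc K M M H).toLinearMap) ∧
  -- ρ(mm') = m₍₀₎m'₍₀₎ ⊗ m₍₁₎m'₍₁₎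
  (ρ ∘ₗ mul = TensorProduct.map mul (LinearMap.mul' K H) ∘ₗ
    (tensorTensorTensorComm K M H M H).toLinearMap ∘ₗ TensorProduct.map ρ ρ)



section Conv

variable {K : Type*} [Field K] {C : Type*} [AddCommGroup C] [Module K C]
  {A : Type*} [Ring A] [Algebra K A]

/-- Convolution product with explicit coalgebra structure data. -/
noncomputable def conv (Δc : C →ₗ[K] C ⊗[K] C) (f g : C →ₗ[K] A) : C →ₗ[K] A :=
  mul' K A ∘ₗ map f g ∘ₗ Δc

variable (Δc : C →ₗ[K] C ⊗[K] C) (εc : C →ₗ[K] K)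

lemma conv_apply (f g : C →ₗ[K] A) (c : C) :
    conv Δc f g c = mul' K A (map f g (Δc c)) := rfl

lemma conv_assoc
    (hco : Δc.rTensor C ∘ₗ Δc =
      (TensorProduct.assoc K C C C).symm.toLinearMap ∘ₗ Δc.lTensor C ∘ₗ Δc)
    (f g h : C →ₗ[K] A) :
    conv Δc (conv Δc f g) h = conv Δc f (conv Δc g h) := by
  have key1 : ∀ t : C ⊗[K] C,
      mul' K A (map (conv Δc f g) h t)
        = (mul' K A ∘ₗ map (mul' K A ∘ₗ map f g) h) (Δc.rTensor C t) := by
    intro t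
    induction t using TensorProduct.induction_on with
    | zero => simp
    | tmul x y => simp [conv_apply]
    | add u v hu hv => simp [map_add, hu, hv]
  have key2 : ∀ t : C ⊗[K] C,
      mul' K A (map f (conv Δc g h) t)
        = (mul' K A ∘ₗ map f (mul' K A ∘ₗ map g h)) (Δc.lTensor C t) := by
    intro t
    induction t using TensorProduct.induction_on with
    | zero => simp
    | tmul x y => simp [conv_apply]
    | add u v hu hv => simp [map_add, hu, hv]
  have key3 : ∀ z : C ⊗[K] (C ⊗[K] C),
      (mul' K A ∘ₗ map (mul' K A ∘ₗ map f g) h)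
          ((TensorProduct.assoc K C C C).symm z)
        = (mul' K A ∘ₗ map f (mul' K A ∘ₗ map g h)) z := by
    intro z
    induction z using TensorProduct.induction_on with
    | zero => simp
    | tmul x yz =>
      induction yz using TensorProduct.induction_on with
      | zero => simp
      | tmul y z => simp [mul_assoc]
      | add u v hu hv => simp only [tmul_add, map_add, hu, hv]
    | add u v hu hv =>
      simp only [map_add, coe_comp, Function.comp_apply] at hu hv ⊢
      rw [hu, hv]
  ext c
  have := congr($hco c)
  simp only [coe_comp, Function.comp_apply, LinearEquiv.coe_coe] at this
  rw [conv_apply, conv_apply, key1, key2, this, key3]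

lemma conv_unit_left
    (hl : ∀ c : C, εc.rTensor C (Δc c) = (1:K) ⊗ₜ[K] c)
    (f : C →ₗ[K] A) :
    conv Δc (Algebra.linearMap K A ∘ₗ εc) f = f := by
  ext c
  have key : ∀ t : C ⊗[K] C,
      mul' K A (map (Algebra.linearMap K A ∘ₗ εc) f t)
        = (mul' K A ∘ₗ map (Algebra.linearMap K A) f) (εc.rTensor C t) := by
    intro t
    induction t using TensorProduct.induction_on with
    | zero => simp
    | tmul x y => simp
    | add u v hu hv => simp only [map_add, hu, hv]
  rw [conv_apply, key, hl]
  simp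

lemma conv_unit_right
    (hr : ∀ c : C, εc.lTensor C (Δc c) = c ⊗ₜ[K] (1:K))
    (f : C →ₗ[K] A) :
    conv Δc f (Algebra.linearMap K A ∘ₗ εc) = f := by
  ext c
  have key : ∀ t : C ⊗[K] C,
      mul' K A (map f (Algebra.linearMap K A ∘ₗ εc) t)
        = (mul' K A ∘ₗ map f (Algebra.linearMap K A)) (εc.lTensor C t) := by
    intro t
    induction t using TensorProduct.induction_on with
    | zero => simp
    | tmul x y => simp
    | add u v hu hv => simp only [map_add, hu, hv]
  rw [conv_apply, key, hr]
  simp [Algebra.algebraMap_eq_smul_one]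

lemma conv_inv_unique
    (hco : Δc.rTensor C ∘ₗ Δc =
      (TensorProduct.assoc K C C C).symm.toLinearMap ∘ₗ Δc.lTensor C ∘ₗ Δc)
    (hl : ∀ c : C, εc.rTensor C (Δc c) = (1:K) ⊗ₜ[K] c)
    (hr : ∀ c : C, εc.lTensor C (Δc c) = c ⊗ₜ[K] (1:K))
    (f g h : C →ₗ[K] A)
    (hfg : conv Δc f g = Algebra.linearMap K A ∘ₗ εc)
    (hgh : conv Δc g h = Algebra.linearMap K A ∘ₗ εc) :
    f = h := by
  have := conv_assoc Δc hco f g h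
  rw [hfg, hgh, conv_unit_left Δc εc hl, conv_unit_right Δc εc hr] at this
  exact this.symm

end Conv

open Coalgebra
set_option synthInstance.maxHeartbeats 1000000
set_option maxHeartbeats 1000000

section Development

variable {K : Type*} [Field K] {H : Type*} [Ring H] [HopfAlgebra K H]

local notation "Δ" => (Coalgebra.comul (R := K) (A := H))
local notation "ε" => (Coalgebra.counit (R := K) (A := H))
local notation "𝒮" => (HopfAlgebra.antipode (R := K) (A := H))

/-- comultiplication on `H ⊗ H` -/
noncomputable def Δ₂ : H ⊗[K] H →ₗ[K] (H ⊗[K] H) ⊗[K] (H ⊗[K] H) :=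
  (tensorTensorTensorComm K H H H H).toLinearMap ∘ₗ map Δ Δ

/-- counit on `H ⊗ H` -/
noncomputable def ε₂ : H ⊗[K] H →ₗ[K] K :=
  mul' K K ∘ₗ map ε ε

lemma Δ₂_tmul (a b : H) :
    (Δ₂ (a ⊗ₜ[K] b) : (H ⊗[K] H) ⊗[K] (H ⊗[K] H))
      = tensorTensorTensorComm K H H H H (Δ a ⊗ₜ[K] Δ b) := rfl

lemma ε₂_tmul (a b : H) : (ε₂ (a ⊗ₜ[K] b) : K) = ε a * ε b := by
  simp [ε₂]

lemma Δ₂_counit_left :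
    ∀ c : H ⊗[K] H, (ε₂ (K := K) (H := H)).rTensor _ (Δ₂ c) = (1:K) ⊗ₜ[K] c := by
  have key : ∀ x y : H ⊗[K] H,
      (ε₂ (K := K) (H := H)).rTensor _ (tensorTensorTensorComm K H H H H (x ⊗ₜ[K] y))
        = (map (mul' K K) id ∘ₗ (tensorTensorTensorComm K K H K H).toLinearMap)
            ((rTensor H ε x) ⊗ₜ[K] (rTensor H ε y)) := by
    intro x y
    induction x using TensorProduct.induction_on with
    | zero => simp
    | tmul a₁ a₂ =>
      induction y using TensorProduct.induction_on with
      | zero => simp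
      | tmul b₁ b₂ => simp [ε₂_tmul]
      | add u v hu hv => simp only [tmul_add, map_add, hu, hv]
    | add u v hu hv => simp only [add_tmul, map_add, hu, hv]
  intro c
  induction c using TensorProduct.induction_on with
  | zero => simp
  | tmul a b =>
    rw [Δ₂_tmul, key]
    simp
  | add u v hu hv => rw [map_add, map_add, hu, hv, tmul_add]

lemma Δ₂_counit_right :
    ∀ c : H ⊗[K] H, (ε₂ (K := K) (H := H)).lTensor _ (Δ₂ c) = c ⊗ₜ[K] (1:K) := by
  have key : ∀ x y : H ⊗[K] H,
      (ε₂ (K := K) (H := H)).lTensor _ (tensorTensorTensorComm K H H H H (x ⊗ₜ[K] y))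
        = (map id (mul' K K) ∘ₗ (tensorTensorTensorComm K H K H K).toLinearMap)
            ((lTensor H ε x) ⊗ₜ[K] (lTensor H ε y)) := by
    intro x y
    induction x using TensorProduct.induction_on with
    | zero => simp
    | tmul a₁ a₂ =>
      induction y using TensorProduct.induction_on with
      | zero => simp
      | tmul b₁ b₂ => simp [ε₂_tmul]
      | add u v hu hv => simp only [tmul_add, map_add, hu, hv]
    | add u v hu hv => simp only [add_tmul, map_add, hu, hv]
  intro c
  induction c using TensorProduct.induction_on with
  | zero => simp
  | tmul a b =>
    rw [Δ₂_tmul, key]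
    simp
  | add u v hu hv => rw [map_add, map_add, hu, hv, add_tmul]


section Coassoc2

/-- rearrangement ((x₁⊗y₁)⊗(x₂⊗y₂))⊗(x₃⊗y₃) from (x₁⊗(x₂⊗x₃))⊗(y₁⊗(y₂⊗y₃)) -/
noncomputable def ΩL : (H ⊗[K] (H ⊗[K] H)) ⊗[K] (H ⊗[K] (H ⊗[K] H)) →ₗ[K]
    ((H ⊗[K] H) ⊗[K] (H ⊗[K] H)) ⊗[K] (H ⊗[K] H) :=
  (TensorProduct.assoc K (H ⊗[K] H) (H ⊗[K] H) (H ⊗[K] H)).symm.toLinearMap ∘ₗ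
    lTensor (H ⊗[K] H) (tensorTensorTensorComm K H H H H).toLinearMap ∘ₗ
      (tensorTensorTensorComm K H (H ⊗[K] H) H (H ⊗[K] H)).toLinearMap

noncomputable def ΩR : (H ⊗[K] (H ⊗[K] H)) ⊗[K] (H ⊗[K] (H ⊗[K] H)) →ₗ[K]
    (H ⊗[K] H) ⊗[K] ((H ⊗[K] H) ⊗[K] (H ⊗[K] H)) :=
  lTensor (H ⊗[K] H) (tensorTensorTensorComm K H H H H).toLinearMap ∘ₗ
    (tensorTensorTensorComm K H (H ⊗[K] H) H (H ⊗[K] H)).toLinearMap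

lemma ΩL_eq_ΩR (z w : H ⊗[K] (H ⊗[K] H)) :
    ΩL (K := K) (H := H) (z ⊗ₜ[K] w) =
      (TensorProduct.assoc K (H ⊗[K] H) (H ⊗[K] H) (H ⊗[K] H)).symm (ΩR (K := K) (H := H) (z ⊗ₜ[K] w)) :=
  rfl

lemma subL (x y : H ⊗[K] H) :
    (Δ₂ (K := K) (H := H)).rTensor (H ⊗[K] H) (tensorTensorTensorComm K H H H H (x ⊗ₜ[K] y))
      = ΩL (K := K) (H := H) ((TensorProduct.assoc K H H H (rTensor H Δ x)) ⊗ₜ[K]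
          (TensorProduct.assoc K H H H (rTensor H Δ y))) := by
  induction x using TensorProduct.induction_on with
  | zero => simp [ΩL]
  | tmul a₁ a₂ =>
    induction y using TensorProduct.induction_on with
    | zero => simp [ΩL]
    | tmul b₁ b₂ =>
      rw [tensorTensorTensorComm_tmul, rTensor_tmul, rTensor_tmul, rTensor_tmul, Δ₂_tmul]
      generalize (Δ a₁ : H ⊗[K] H) = u
      generalize (Δ b₁ : H ⊗[K] H) = v
      induction u using TensorProduct.induction_on with
      | zero => simp [ΩL]
      | tmul u₁ u₂ =>
        induction v using TensorProduct.induction_on with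
        | zero => simp [ΩL]
        | tmul v₁ v₂ => simp [ΩL]
        | add s t hs ht => simp only [tmul_add, add_tmul, map_add, hs, ht]
      | add s t hs ht => simp only [tmul_add, add_tmul, map_add, hs, ht]
    | add s t hs ht => simp only [tmul_add, add_tmul, map_add, hs, ht]
  | add s t hs ht => simp only [tmul_add, add_tmul, map_add, hs, ht]

lemma subR (x y : H ⊗[K] H) :
    (Δ₂ (K := K) (H := H)).lTensor (H ⊗[K] H) (tensorTensorTensorComm K H H H H (x ⊗ₜ[K] y))
      = ΩR (K := K) (H := H) ((lTensor H Δ x) ⊗ₜ[K] (lTensor H Δ y)) := by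
  induction x using TensorProduct.induction_on with
  | zero => simp [ΩR]
  | tmul a₁ a₂ =>
    induction y using TensorProduct.induction_on with
    | zero => simp [ΩR]
    | tmul b₁ b₂ =>
      rw [tensorTensorTensorComm_tmul, lTensor_tmul, lTensor_tmul, lTensor_tmul, Δ₂_tmul]
      generalize (Δ a₂ : H ⊗[K] H) = u
      generalize (Δ b₂ : H ⊗[K] H) = v
      induction u using TensorProduct.induction_on with
      | zero => simp [ΩR]
      | tmul u₁ u₂ =>
        induction v using TensorProduct.induction_on with
        | zero => simp [ΩR]
        | tmul v₁ v₂ => simp [ΩR]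
        | add s t hs ht => simp only [tmul_add, add_tmul, map_add, hs, ht]
      | add s t hs ht => simp only [tmul_add, add_tmul, map_add, hs, ht]
    | add s t hs ht => simp only [tmul_add, add_tmul, map_add, hs, ht]
  | add s t hs ht => simp only [tmul_add, add_tmul, map_add, hs, ht]

lemma Δ₂_coassoc :
    (Δ₂ (K := K) (H := H)).rTensor _ ∘ₗ Δ₂ =
      (TensorProduct.assoc K (H ⊗[K] H) (H ⊗[K] H) (H ⊗[K] H)).symm.toLinearMap ∘ₗ
        (Δ₂ (K := K) (H := H)).lTensor _ ∘ₗ Δ₂ := by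
  ext a b
  show (Δ₂ (K := K) (H := H)).rTensor _ (Δ₂ (a ⊗ₜ[K] b)) =
    (TensorProduct.assoc K (H ⊗[K] H) (H ⊗[K] H) (H ⊗[K] H)).symm
      ((Δ₂ (K := K) (H := H)).lTensor _ (Δ₂ (a ⊗ₜ[K] b)))
  rw [Δ₂_tmul, subL, subR, Coalgebra.coassoc_apply, Coalgebra.coassoc_apply, ΩL_eq_ΩR]

end Coassoc2

section AntipodeProps

lemma conv_S_mul :
    conv (Δ₂ (K := K) (H := H)) (𝒮 ∘ₗ mul' K H) (mul' K H)
      = Algebra.linearMap K H ∘ₗ ε₂ := by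
  apply TensorProduct.ext'
  intro a b
  have key : ∀ x y : H ⊗[K] H,
      mul' K H (map (𝒮 ∘ₗ mul' K H) (mul' K H) (tensorTensorTensorComm K H H H H (x ⊗ₜ[K] y)))
        = mul' K H (rTensor H 𝒮 (mul' K (H ⊗[K] H) (x ⊗ₜ[K] y))) := by
    intro x y
    induction x using TensorProduct.induction_on with
    | zero => simp
    | tmul a₁ a₂ =>
      induction y using TensorProduct.induction_on with
      | zero => simp
      | tmul b₁ b₂ => simp [Algebra.TensorProduct.tmul_mul_tmul]
      | add u v hu hv => simp only [tmul_add, map_add, hu, hv]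
    | add u v hu hv => simp only [add_tmul, map_add, hu, hv]
  rw [conv_apply, Δ₂_tmul, key]
  simp only [mul'_apply, Algebra.TensorProduct.tmul_mul_tmul]
  rw [show (Δ a : H ⊗[K] H) * Δ b = Δ (a * b) from (Bialgebra.comul_mul a b).symm,
    HopfAlgebra.mul_antipode_rTensor_comul_apply, Bialgebra.counit_mul]
  simp [ε₂_tmul]

lemma conv_mul_Smul :
    conv (Δ₂ (K := K) (H := H)) (mul' K H)
        (mul' K H ∘ₗ map 𝒮 𝒮 ∘ₗ (TensorProduct.comm K H H).toLinearMap)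
      = Algebra.linearMap K H ∘ₗ ε₂ := by
  apply TensorProduct.ext'
  intro a b
  set ra := Coalgebra.Repr.arbitrary K a with hra
  set rb := Coalgebra.Repr.arbitrary K b with hrb
  rw [conv_apply, Δ₂_tmul, ← ra.eq, ← rb.eq]
  rw [sum_tmul]
  simp only [map_sum, tmul_sum]
  have step : ∀ i ∈ ra.index, ∀ j ∈ rb.index,
      mul' K H (map (mul' K H)
        (mul' K H ∘ₗ map 𝒮 𝒮 ∘ₗ (TensorProduct.comm K H H).toLinearMap)
        (tensorTensorTensorComm K H H H H
          ((ra.left i ⊗ₜ[K] ra.right i) ⊗ₜ[K] (rb.left j ⊗ₜ[K] rb.right j))))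
      = ra.left i * ((rb.left j * 𝒮 (rb.right j)) * 𝒮 (ra.right i)) := by
    intro i _ j _
    simp [mul_assoc]
  rw [Finset.sum_congr rfl fun i hi => Finset.sum_congr rfl fun j hj => step i hi j hj]
  have inner : ∀ i ∈ ra.index,
      ∑ j ∈ rb.index, ra.left i * ((rb.left j * 𝒮 (rb.right j)) * 𝒮 (ra.right i))
        = Coalgebra.counit (R := K) b • (ra.left i * 𝒮 (ra.right i)) := by
    intro i _
    rw [← Finset.mul_sum, ← Finset.sum_mul, HopfAlgebra.sum_mul_antipode_eq_algebraMap_counit rb]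
    rw [Algebra.algebraMap_eq_smul_one]
    rw [smul_mul_assoc, one_mul, mul_smul_comm]
  rw [Finset.sum_congr rfl inner, ← Finset.smul_sum, HopfAlgebra.sum_mul_antipode_eq_algebraMap_counit ra]
  simp only [coe_comp, Function.comp_apply, Algebra.linearMap_apply, ε₂_tmul]
  rw [Algebra.smul_def, ← map_mul, mul_comm]

lemma antipode_mul' (a b : H) : 𝒮 (a * b) = 𝒮 b * 𝒮 a := by
  have h := conv_inv_unique (Δ₂ (K := K) (H := H)) ε₂ Δ₂_coassoc Δ₂_counit_left Δ₂_counit_right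
    (𝒮 ∘ₗ mul' K H) (mul' K H)
    (mul' K H ∘ₗ map 𝒮 𝒮 ∘ₗ (TensorProduct.comm K H H).toLinearMap)
    conv_S_mul conv_mul_Smul
  have := congr($h (a ⊗ₜ[K] b))
  simpa using this

end AntipodeProps

section ComulAntipode

noncomputable def M1map : H ⊗[K] (H ⊗[K] H) →ₗ[K] H ⊗[K] H :=
  mul' K (H ⊗[K] H) ∘ₗ
    map Δ ((TensorProduct.comm K H H).toLinearMap ∘ₗ map 𝒮 𝒮)

noncomputable def Tmap (c : H) : H ⊗[K] H →ₗ[K] H ⊗[K] H :=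
  mul' K (H ⊗[K] H) ∘ₗ map Δ (TensorProduct.mk K H H (𝒮 c) ∘ₗ 𝒮)

noncomputable def Umap (c : H) : H ⊗[K] (H ⊗[K] H) →ₗ[K] H ⊗[K] H :=
  map (mulRight K (𝒮 c)) (mul' K H ∘ₗ lTensor H 𝒮)

noncomputable def Wmap (c : H) : H ⊗[K] H →ₗ[K] H ⊗[K] H :=
  map (mulRight K (𝒮 c)) (Algebra.linearMap K H ∘ₗ Coalgebra.counit)

lemma claim1 (x : H ⊗[K] H) :
    mul' K (H ⊗[K] H)
      (map Δ ((TensorProduct.comm K H H).toLinearMap ∘ₗ map 𝒮 𝒮 ∘ₗ Δ) x)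
      = M1map (K := K) (H := H) (lTensor H Δ x) := by
  induction x using TensorProduct.induction_on with
  | zero => simp
  | tmul y z => simp [M1map]
  | add u v hu hv => simp only [map_add, hu, hv]

lemma claim2 (w : H ⊗[K] H) (c : H) :
    M1map (K := K) (H := H) (TensorProduct.assoc K H H H (w ⊗ₜ[K] c))
      = Tmap c w := by
  induction w using TensorProduct.induction_on with
  | zero => simp [M1map, Tmap]
  | tmul u v => simp [M1map, Tmap]
  | add u v hu hv => simp only [add_tmul, map_add, hu, hv]

lemma claim3 (w : H ⊗[K] H) (c : H) :
    Tmap (K := K) (H := H) c w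
      = Umap c (TensorProduct.assoc K H H H (rTensor H Δ w)) := by
  induction w using TensorProduct.induction_on with
  | zero => simp [Tmap, Umap]
  | tmul x z =>
    rw [rTensor_tmul]
    have hT : Tmap (K := K) (H := H) c (x ⊗ₜ[K] z)
        = mul' K (H ⊗[K] H) ((Δ x) ⊗ₜ[K] (𝒮 c ⊗ₜ[K] 𝒮 z)) := by
      simp [Tmap]
    rw [hT]
    generalize (Δ x : H ⊗[K] H) = t
    induction t using TensorProduct.induction_on with
    | zero => simp [Umap]
    | tmul x₁ x₂ => simp [Umap, Algebra.TensorProduct.tmul_mul_tmul]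
    | add u v hu hv => simp only [add_tmul, map_add, hu, hv]
  | add u v hu hv => simp only [add_tmul, map_add, hu, hv]

lemma claim4 (w : H ⊗[K] H) (c : H) :
    Umap (K := K) (H := H) c (lTensor H Δ w) = Wmap c w := by
  induction w using TensorProduct.induction_on with
  | zero => simp
  | tmul x y => simp [Umap, Wmap]
  | add u v hu hv => simp only [map_add, hu, hv]

lemma claim5 (c e : H) :
    Wmap (K := K) (H := H) c (Δ e) = (e * 𝒮 c) ⊗ₜ[K] (1 : H) := by
  have : Wmap (K := K) (H := H) c (Δ e)
      = map (mulRight K (𝒮 c)) (Algebra.linearMap K H) (lTensor H Coalgebra.counit (Δ e)) := by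
    generalize (Δ e : H ⊗[K] H) = t
    induction t using TensorProduct.induction_on with
    | zero => simp
    | tmul x y => simp [Wmap]
    | add u v hu hv => simp only [map_add, hu, hv]
  rw [this, Coalgebra.lTensor_counit_comul]
  simp

lemma conv_comulS_comul :
    conv (Coalgebra.comul (R := K) (A := H)) (Δ ∘ₗ 𝒮) Δ
      = Algebra.linearMap K (H ⊗[K] H) ∘ₗ Coalgebra.counit := by
  ext a
  have key : ∀ x : H ⊗[K] H,
      mul' K (H ⊗[K] H) (map (Δ ∘ₗ 𝒮) Δ x)
        = Δ (mul' K H (rTensor H 𝒮 x)) := by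
    intro x
    induction x using TensorProduct.induction_on with
    | zero => simp
    | tmul y z => simp [← Bialgebra.comul_mul]
    | add u v hu hv => simp only [map_add, hu, hv, map_add]
  rw [conv_apply, key, HopfAlgebra.mul_antipode_rTensor_comul_apply]
  simp

lemma conv_comul_Scomul :
    conv (Coalgebra.comul (R := K) (A := H)) Δ
        ((TensorProduct.comm K H H).toLinearMap ∘ₗ map 𝒮 𝒮 ∘ₗ Δ)
      = Algebra.linearMap K (H ⊗[K] H) ∘ₗ Coalgebra.counit := by
  ext a
  set ra := Coalgebra.Repr.arbitrary K a with hra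
  rw [conv_apply, claim1]
  rw [show (lTensor H Δ (Δ a) : H ⊗[K] (H ⊗[K] H))
      = TensorProduct.assoc K H H H (rTensor H Δ (Δ a)) from (Coalgebra.coassoc_apply a).symm]
  rw [← ra.eq, map_sum, map_sum]
  simp only [rTensor_tmul]
  rw [map_sum]
  rw [Finset.sum_congr rfl fun i _ => claim2 (Δ (ra.left i)) (ra.right i)]
  rw [Finset.sum_congr rfl fun i _ => claim3 (Δ (ra.left i)) (ra.right i)]
  have step3 : ∑ i ∈ ra.index,
        Umap (K := K) (H := H) (ra.right i)
          (TensorProduct.assoc K H H H (rTensor H Δ (Δ (ra.left i))))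
      = ∑ i ∈ ra.index, Umap (K := K) (H := H) (ra.right i) (lTensor H Δ (Δ (ra.left i))) :=
    Finset.sum_congr rfl fun i _ => by rw [Coalgebra.coassoc_apply]
  rw [step3]
  rw [Finset.sum_congr rfl fun i _ => claim4 (Δ (ra.left i)) (ra.right i)]
  rw [Finset.sum_congr rfl fun i _ => claim5 (ra.right i) (ra.left i)]
  rw [← sum_tmul, HopfAlgebra.sum_mul_antipode_eq_algebraMap_counit ra]
  simp [Algebra.TensorProduct.algebraMap_apply]

lemma comul_antipode' (a : H) :
    (Δ (𝒮 a) : H ⊗[K] H) = TensorProduct.comm K H H (map 𝒮 𝒮 (Δ a)) := by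
  have h := conv_inv_unique (Coalgebra.comul (R := K) (A := H)) Coalgebra.counit
    Coalgebra.coassoc_symm.symm Coalgebra.rTensor_counit_comul Coalgebra.lTensor_counit_comul
    (Δ ∘ₗ 𝒮) Δ ((TensorProduct.comm K H H).toLinearMap ∘ₗ map 𝒮 𝒮 ∘ₗ Δ)
    conv_comulS_comul conv_comul_Scomul
  exact congr($h a)

end ComulAntipode

section HopfModule

variable {M : Type*} [AddCommGroup M] [Module K M]
variable (act : M ⊗[K] H →ₗ[K] M) (ρ : M →ₗ[K] M ⊗[K] H)

/-- `F act m'` sends `u ⊗ (v₁ ⊗ v₂)` to `act (m' ⊗ 𝒮 v₂) ⊗ (u * 𝒮 v₁)` -/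
noncomputable def Fmap (m' : M) : H ⊗[K] (H ⊗[K] H) →ₗ[K] M ⊗[K] H :=
  map (act ∘ₗ TensorProduct.mk K M H m') (mul' K H) ∘ₗ
    (TensorProduct.leftComm K H H H).toLinearMap ∘ₗ
      lTensor H ((TensorProduct.comm K H H).toLinearMap ∘ₗ map 𝒮 𝒮)

/-- `G act m' c` sends `x ⊗ y` to `act (m' ⊗ 𝒮 c) ⊗ (x * 𝒮 y)` -/
noncomputable def Gmap (m' : M) (c : H) : H ⊗[K] H →ₗ[K] M ⊗[K] H :=
  TensorProduct.mk K M H (act (m' ⊗ₜ[K] 𝒮 c)) ∘ₗ mul' K H ∘ₗ lTensor H 𝒮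

/-- coinvariance of `P`: `ρ (P m) = P m ⊗ 1` -/
lemma rho_P (hact : ∀ (m : M) (h h' : H), act (act (m ⊗ₜ[K] h) ⊗ₜ[K] h') = act (m ⊗ₜ[K] (h * h')))
    (hcoass : rTensor H ρ ∘ₗ ρ =
      (TensorProduct.assoc K M H H).symm.toLinearMap ∘ₗ lTensor M (Coalgebra.comul (R := K)) ∘ₗ ρ)
    (hcompat : ρ ∘ₗ act =
      map act (mul' K H) ∘ₗ (tensorTensorTensorComm K M H H H).toLinearMap ∘ₗ
        map ρ (Coalgebra.comul (R := K)))
    (m : M) :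
    ρ (act (lTensor M 𝒮 (ρ m))) = act (lTensor M 𝒮 (ρ m)) ⊗ₜ[K] (1 : H) := by
  set C₀ : (M ⊗[K] H) ⊗[K] H →ₗ[K] M ⊗[K] H :=
    map act (mul' K H) ∘ₗ (tensorTensorTensorComm K M H H H).toLinearMap ∘ₗ
      lTensor (M ⊗[K] H) ((Coalgebra.comul (R := K) (A := H)) ∘ₗ 𝒮) with hC₀
  -- Step 1 : ρ (act (lTensor 𝒮 z)) = C₀ (rTensor ρ z)
  have step1 : ∀ z : M ⊗[K] H, ρ (act (lTensor M 𝒮 z)) = C₀ (rTensor H ρ z) := by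
    intro z
    induction z using TensorProduct.induction_on with
    | zero => simp
    | tmul m' h =>
      have := congr($hcompat (m' ⊗ₜ[K] 𝒮 h))
      simpa [hC₀] using this
    | add u v hu hv => simp only [map_add, hu, hv]
  rw [step1]
  have step2 := congr($hcoass m)
  simp only [coe_comp, Function.comp_apply, LinearEquiv.coe_coe] at step2
  rw [step2]
  -- expand ρ m as a finite sum
  obtain ⟨s, hs⟩ := TensorProduct.exists_finset (ρ m)
  rw [hs]
  simp only [map_sum, lTensor_tmul]
  -- Claim D : C₀ (assoc.symm (m' ⊗ w)) = Fmap act m' (lTensor Δ w)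
  have claimD : ∀ (m' : M) (w : H ⊗[K] H),
      C₀ ((TensorProduct.assoc K M H H).symm (m' ⊗ₜ[K] w))
        = Fmap (K := K) act m' (lTensor H (Coalgebra.comul (R := K)) w) := by
    intro m' w
    induction w using TensorProduct.induction_on with
    | zero => simp
    | tmul u v =>
      have h1 : (TensorProduct.assoc K M H H).symm (m' ⊗ₜ[K] (u ⊗ₜ[K] v))
          = (m' ⊗ₜ[K] u) ⊗ₜ[K] v := rfl
      rw [h1, lTensor_tmul]
      have h2 : C₀ ((m' ⊗ₜ[K] u) ⊗ₜ[K] v)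
          = map act (mul' K H) (tensorTensorTensorComm K M H H H
              ((m' ⊗ₜ[K] u) ⊗ₜ[K] (TensorProduct.comm K H H (map 𝒮 𝒮 (Δ v))))) := by
        simp [hC₀, comul_antipode']
      rw [h2]
      generalize (Δ v : H ⊗[K] H) = t
      induction t using TensorProduct.induction_on with
      | zero => simp [Fmap]
      | tmul v₁ v₂ => simp [Fmap]
      | add p q hp hq => simp only [map_add, tmul_add, hp, hq]
    | add p q hp hq => simp only [map_add, tmul_add, hp, hq]
  rw [Finset.sum_congr rfl fun p _ => claimD p.1 (Δ p.2)]
  -- use coassociativity of H on each p.2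
  have step3 : ∀ p : M × H,
      lTensor H (Coalgebra.comul (R := K)) (Δ p.2)
        = TensorProduct.assoc K H H H (rTensor H (Coalgebra.comul (R := K)) (Δ p.2)) :=
    fun p => (Coalgebra.coassoc_apply p.2).symm
  rw [Finset.sum_congr rfl fun p _ => congrArg (Fmap (K := K) act p.1) (step3 p)]
  -- Claim E : Fmap act m' (assoc (w ⊗ c)) = Gmap act m' c w
  have claimE : ∀ (m' : M) (w : H ⊗[K] H) (c : H),
      Fmap (K := K) act m' (TensorProduct.assoc K H H H (w ⊗ₜ[K] c))
        = Gmap (K := K) act m' c w := by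
    intro m' w c
    induction w using TensorProduct.induction_on with
    | zero => simp [Fmap, Gmap]
    | tmul x y => simp [Fmap, Gmap]
    | add p q hp hq => simp only [add_tmul, map_add, hp, hq]
  have expand : ∀ p : M × H,
      Fmap (K := K) act p.1
          (TensorProduct.assoc K H H H (rTensor H (Coalgebra.comul (R := K)) (Δ p.2)))
        = act (p.1 ⊗ₜ[K] 𝒮 p.2) ⊗ₜ[K] (1 : H) := by
    intro p
    set rp := Coalgebra.Repr.arbitrary K p.2 with hrp
    rw [← rp.eq, map_sum, map_sum, map_sum]
    simp only [rTensor_tmul]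
    rw [Finset.sum_congr rfl fun i _ => claimE p.1 (Δ (rp.left i)) (rp.right i)]
    set φ : H →ₗ[K] M ⊗[K] H :=
      (TensorProduct.mk K M H).flip 1 ∘ₗ act ∘ₗ TensorProduct.mk K M H p.1 ∘ₗ 𝒮 with hφ
    have gterm : ∀ (c e : H), Gmap (K := K) act p.1 c (Δ e)
        = Coalgebra.counit (R := K) e • φ c := by
      intro c e
      have : Gmap (K := K) act p.1 c (Δ e)
          = TensorProduct.mk K M H (act (p.1 ⊗ₜ[K] 𝒮 c))
              (mul' K H (lTensor H 𝒮 (Δ e))) := rfl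
      rw [this, HopfAlgebra.mul_antipode_lTensor_comul_apply]
      rw [Algebra.algebraMap_eq_smul_one]
      simp [hφ, tmul_smul]
    rw [Finset.sum_congr rfl fun i _ => gterm (rp.right i) (rp.left i)]
    have hε : ∑ i ∈ rp.index, Coalgebra.counit (R := K) (rp.left i) • rp.right i = p.2 := by
      have h0 := Coalgebra.sum_counit_tmul_eq rp
      have h1 := congrArg (TensorProduct.lid K H) h0
      simpa [-Coalgebra.sum_counit_tmul_eq, map_sum] using h1
    calc ∑ i ∈ rp.index, Coalgebra.counit (R := K) (rp.left i) • φ (rp.right i)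
        = φ (∑ i ∈ rp.index, Coalgebra.counit (R := K) (rp.left i) • rp.right i) := by
          rw [map_sum]
          exact Finset.sum_congr rfl fun i _ => (map_smul φ _ _).symm
      _ = φ p.2 := by rw [hε]
      _ = act (p.1 ⊗ₜ[K] 𝒮 p.2) ⊗ₜ[K] (1 : H) := rfl
  rw [Finset.sum_congr rfl fun p _ => expand p, sum_tmul]


section Claims

variable (mul : M ⊗[K] M →ₗ[K] M)

/-- Claim B: `P (P x · y) = P x · P y` -/
lemma claimB
    (hactmul : act ∘ₗ rTensor H mul =
      mul ∘ₗ lTensor M act ∘ₗ (TensorProduct.assoc K M M H).toLinearMap)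
    (hrhomul : ρ ∘ₗ mul = map mul (mul' K H) ∘ₗ
      (tensorTensorTensorComm K M H M H).toLinearMap ∘ₗ map ρ ρ)
    (x y : M)
    (hPx : ρ (act (lTensor M 𝒮 (ρ x))) = act (lTensor M 𝒮 (ρ x)) ⊗ₜ[K] (1 : H)) :
    act (lTensor M 𝒮 (ρ (mul (act (lTensor M 𝒮 (ρ x)) ⊗ₜ[K] y))))
      = mul (act (lTensor M 𝒮 (ρ x)) ⊗ₜ[K] act (lTensor M 𝒮 (ρ y))) := by
  have hActMul : ∀ (a b : M) (h : H),
      act (mul (a ⊗ₜ[K] b) ⊗ₜ[K] h) = mul (a ⊗ₜ[K] act (b ⊗ₜ[K] h)) := by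
    intro a b h
    have := congr($hactmul ((a ⊗ₜ[K] b) ⊗ₜ[K] h))
    simpa using this
  have hRhoMul : ∀ (a b : M),
      ρ (mul (a ⊗ₜ[K] b)) = map mul (mul' K H)
        (tensorTensorTensorComm K M H M H (ρ a ⊗ₜ[K] ρ b)) := by
    intro a b
    have := congr($hrhomul (a ⊗ₜ[K] b))
    simpa using this
  set Px := act (lTensor M 𝒮 (ρ x)) with hPxdef
  rw [hRhoMul, hPx]
  -- now compute act (lTensor 𝒮 (map mul mul' (ttt ((Px ⊗ 1) ⊗ w)))) = mul (Px ⊗ act (lTensor 𝒮 w))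
  have key : ∀ (a : M) (w : M ⊗[K] H),
      act (lTensor M 𝒮 (map mul (mul' K H)
          (tensorTensorTensorComm K M H M H ((a ⊗ₜ[K] (1:H)) ⊗ₜ[K] w))))
        = mul (a ⊗ₜ[K] act (lTensor M 𝒮 w)) := by
    intro a w
    induction w using TensorProduct.induction_on with
    | zero => simp
    | tmul y' v => simp [hActMul]
    | add u v hu hv => simp only [map_add, tmul_add, hu, hv]
  rw [key]

/-- Claim A: `P (x · y) = P (x · P y)` -/
lemma claimA
    (hact : ∀ (m : M) (h h' : H), act (act (m ⊗ₜ[K] h) ⊗ₜ[K] h') = act (m ⊗ₜ[K] (h * h')))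
    (hactmul : act ∘ₗ rTensor H mul =
      mul ∘ₗ lTensor M act ∘ₗ (TensorProduct.assoc K M M H).toLinearMap)
    (hrhomul : ρ ∘ₗ mul = map mul (mul' K H) ∘ₗ
      (tensorTensorTensorComm K M H M H).toLinearMap ∘ₗ map ρ ρ)
    (x y : M)
    (hPy : ρ (act (lTensor M 𝒮 (ρ y))) = act (lTensor M 𝒮 (ρ y)) ⊗ₜ[K] (1 : H)) :
    act (lTensor M 𝒮 (ρ (mul (x ⊗ₜ[K] y))))
      = act (lTensor M 𝒮 (ρ (mul (x ⊗ₜ[K] act (lTensor M 𝒮 (ρ y)))))) := by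
  have hActMul : ∀ (a b : M) (h : H),
      act (mul (a ⊗ₜ[K] b) ⊗ₜ[K] h) = mul (a ⊗ₜ[K] act (b ⊗ₜ[K] h)) := by
    intro a b h
    have := congr($hactmul ((a ⊗ₜ[K] b) ⊗ₜ[K] h))
    simpa using this
  have hRhoMul : ∀ (a b : M),
      ρ (mul (a ⊗ₜ[K] b)) = map mul (mul' K H)
        (tensorTensorTensorComm K M H M H (ρ a ⊗ₜ[K] ρ b)) := by
    intro a b
    have := congr($hrhomul (a ⊗ₜ[K] b))
    simpa using this
  rw [hRhoMul, hRhoMul, hPy]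
  -- key pointwise identity
  have key : ∀ (w : M ⊗[K] H) (z : M ⊗[K] H),
      act (lTensor M 𝒮 (map mul (mul' K H)
          (tensorTensorTensorComm K M H M H (z ⊗ₜ[K] w))))
        = act (lTensor M 𝒮 (map mul (mul' K H)
            (tensorTensorTensorComm K M H M H
              (z ⊗ₜ[K] (act (lTensor M 𝒮 w) ⊗ₜ[K] (1:H)))))) := by
    intro w
    induction w using TensorProduct.induction_on with
    | zero => intro z; simp
    | tmul y' v =>
      intro z
      induction z using TensorProduct.induction_on with
      | zero => simp
      | tmul x' u =>
        simp only [tensorTensorTensorComm_tmul, map_tmul, lTensor_tmul, mul'_apply,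
          mul_one]
        rw [antipode_mul', ← hact, hActMul]
      | add p q hp hq => simp only [map_add, add_tmul, hp, hq]
    | add p q hp hq =>
      intro z
      have h1 : act (lTensor M 𝒮 (map mul (mul' K H)
          (tensorTensorTensorComm K M H M H (z ⊗ₜ[K] (p + q)))))
          = act (lTensor M 𝒮 (map mul (mul' K H)
            (tensorTensorTensorComm K M H M H (z ⊗ₜ[K] p))))
          + act (lTensor M 𝒮 (map mul (mul' K H)
            (tensorTensorTensorComm K M H M H (z ⊗ₜ[K] q)))) := by
        simp only [tmul_add, map_add]
      rw [h1, hp z, hq z]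
      simp only [map_add, add_tmul, tmul_add]
  rw [key]

end Claims

end HopfModule

end Development

theorem rightHopfModuleAlgebra_rotaBaxterAlgebra
    (K : Type*) [Field K] (H : Type*) [Ring H] [HopfAlgebra K H]
    (M : Type*) [AddCommGroup M] [Module K M]
    (act : M ⊗[K] H →ₗ[K] M) (ρ : M →ₗ[K] M ⊗[K] H) (mul : M ⊗[K] M →ₗ[K] M)
    (hM : IsRightHopfModuleAlgebra K H act ρ mul)
    -- P_R(m) = m₍₀₎ · S(m₍₁₎)
    (P : M →ₗ[K] M)
    (hP : P = act ∘ₗ lTensor M (HopfAlgebra.antipode (R := K)) ∘ₗ ρ) :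
    ∀ x y : M, mul (P x ⊗ₜ[K] P y) =
      P (mul (x ⊗ₜ[K] P y)) + P (mul (P x ⊗ₜ[K] y)) - P (mul (x ⊗ₜ[K] y)) := by
  obtain ⟨⟨hact, hact1, hcoass, hcounit, hcompat⟩, hassoc, hactmul, hrhomul⟩ := hM
  subst hP
  intro x y
  simp only [coe_comp, Function.comp_apply]
  have hPx := rho_P act ρ hact hcoass hcompat x
  have hPy := rho_P act ρ hact hcoass hcompat y
  have hB := claimB act ρ mul hactmul hrhomul x y hPx
  have hA := claimA act ρ mul hact hactmul hrhomul x y hPy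
  rw [hB, ← hA]
  abel
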